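/- The class of languages accepted by DFAwtls is strictly contained in the class of languages accepted by RDFAwtls: ℒ(DFAwtl) ⊊ ℒ(RDFAwtl). -/

import Mathlib

/-- A nondeterministic finite automaton with translucent letters (NFAwtl). -/
structure NFAwtl (Q α : Type) where
  τ : Q → Set α
  I : Set Q
  F : Set Q
  δ : Q → α → Set Q
  tr : ∀ q a, a ∈ τ q → δ q a = ∅

namespace NFAwtl

variable {Q α : Type}

/-- One computation step of an NFAwtl: delete the leftmost non-translucent letter
and change state (the head returns to the left end). -/
def Step (A : NFAwtl Q α) : Q × List α → Q × List α → Prop := fun c c' =>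
  ∃ u a v, c.2 = u ++ a :: v ∧ (∀ x ∈ u, x ∈ A.τ c.1) ∧ a ∉ A.τ c.1 ∧
    c'.1 ∈ A.δ c.1 a ∧ c'.2 = u ++ v

/-- Acceptance: from some initial state, reach a configuration whose remaining
letters are all translucent for a final state. -/
def Accepts (A : NFAwtl Q α) (w : List α) : Prop :=
  ∃ q₀ ∈ A.I, ∃ q w', Relation.ReflTransGen A.Step (q₀, w) (q, w') ∧
    (∀ x ∈ w', x ∈ A.τ q) ∧ q ∈ A.F

def lang (A : NFAwtl Q α) : Set (List α) := { w | A.Accepts w }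

/-- A DFAwtl: single initial state and at most one transition per state/letter. -/
def Deterministic (A : NFAwtl Q α) : Prop :=
  (∃ q₀, A.I = {q₀}) ∧ ∀ q a, (A.δ q a).Subsingleton

end NFAwtl

/-- A repetitive NFAwtl (RNFAwtl): on the end-of-tape marker it may accept
(states in `Facc`) or change state via `δend` and continue. -/
structure RNFAwtl (Q α : Type) where
  τ : Q → Set α
  I : Set Q
  δ : Q → α → Set Q
  δend : Q → Set Q
  Facc : Set Q
  tr : ∀ q a, a ∈ τ q → δ q a = ∅
  accEnd : ∀ q, q ∈ Facc → δend q = ∅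

namespace RNFAwtl

variable {Q α : Type}

/-- One computation step of an RNFAwtl: either delete the leftmost
non-translucent letter, or, when all remaining letters are translucent,
change state via a `◁`-transition and continue. -/
def Step (A : RNFAwtl Q α) : Q × List α → Q × List α → Prop := fun c c' =>
  (∃ u a v, c.2 = u ++ a :: v ∧ (∀ x ∈ u, x ∈ A.τ c.1) ∧ a ∉ A.τ c.1 ∧
    c'.1 ∈ A.δ c.1 a ∧ c'.2 = u ++ v)
  ∨ ((∀ x ∈ c.2, x ∈ A.τ c.1) ∧ c'.1 ∈ A.δend c.1 ∧ c'.2 = c.2)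

def Accepts (A : RNFAwtl Q α) (w : List α) : Prop :=
  ∃ q₀ ∈ A.I, ∃ q w', Relation.ReflTransGen A.Step (q₀, w) (q, w') ∧
    (∀ x ∈ w', x ∈ A.τ q) ∧ q ∈ A.Facc

def lang (A : RNFAwtl Q α) : Set (List α) := { w | A.Accepts w }

/-- An RDFAwtl: single initial state and deterministic transitions. -/
def Deterministic (A : RNFAwtl Q α) : Prop :=
  (∃ q₀, A.I = {q₀}) ∧ (∀ q a, (A.δ q a).Subsingleton) ∧ ∀ q, (A.δend q).Subsingleton

end RNFAwtl

/-- A non-returning repetitive NFAwtl (nr-NFAwtl): the head continues from the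
position of the last deleted letter; on the end-of-tape marker it may change
state and return the head to the left end. -/
structure NrNFAwtl (Q α : Type) where
  τ : Q → Set α
  I : Set Q
  δ : Q → α → Set Q
  δend : Q → Set Q
  Facc : Set Q
  tr : ∀ q a, a ∈ τ q → δ q a = ∅
  accEnd : ∀ q, q ∈ Facc → δend q = ∅

namespace NrNFAwtl

variable {Q α : Type}

/-- Configurations are `(x, q, w)`: `x` is the already-skipped prefix, the head
is on the first letter of `w`. -/
def Step (A : NrNFAwtl Q α) :
    List α × Q × List α → List α × Q × List α → Prop := fun c c' =>
  (∃ u a v, c.2.2 = u ++ a :: v ∧ (∀ x ∈ u, x ∈ A.τ c.2.1) ∧ a ∉ A.τ c.2.1 ∧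
    c'.2.1 ∈ A.δ c.2.1 a ∧ c'.1 = c.1 ++ u ∧ c'.2.2 = v)
  ∨ ((∀ x ∈ c.2.2, x ∈ A.τ c.2.1) ∧ c'.2.1 ∈ A.δend c.2.1 ∧ c'.1 = [] ∧
    c'.2.2 = c.1 ++ c.2.2)

def Accepts (A : NrNFAwtl Q α) (w : List α) : Prop :=
  ∃ q₀ ∈ A.I, ∃ x q w', Relation.ReflTransGen A.Step ([], q₀, w) (x, q, w') ∧
    (∀ y ∈ w', y ∈ A.τ q) ∧ q ∈ A.Facc

def lang (A : NrNFAwtl Q α) : Set (List α) := { w | A.Accepts w }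

def Deterministic (A : NrNFAwtl Q α) : Prop :=
  (∃ q₀, A.I = {q₀}) ∧ (∀ q a, (A.δ q a).Subsingleton) ∧ ∀ q, (A.δend q).Subsingleton

end NrNFAwtl

/-- A non-repetitive non-returning NFAwtl (nr-nr-NFAwtl): non-returning, and it
must halt as soon as all remaining letters to the right are translucent. -/
structure NrnrNFAwtl (Q α : Type) where
  τ : Q → Set α
  I : Set Q
  F : Set Q
  δ : Q → α → Set Q
  tr : ∀ q a, a ∈ τ q → δ q a = ∅

namespace NrnrNFAwtl

variable {Q α : Type}

def Step (A : NrnrNFAwtl Q α) :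
    List α × Q × List α → List α × Q × List α → Prop := fun c c' =>
  ∃ u a v, c.2.2 = u ++ a :: v ∧ (∀ x ∈ u, x ∈ A.τ c.2.1) ∧ a ∉ A.τ c.2.1 ∧
    c'.2.1 ∈ A.δ c.2.1 a ∧ c'.1 = c.1 ++ u ∧ c'.2.2 = v

def Accepts (A : NrnrNFAwtl Q α) (w : List α) : Prop :=
  ∃ q₀ ∈ A.I, ∃ x q w', Relation.ReflTransGen A.Step ([], q₀, w) (x, q, w') ∧
    (∀ y ∈ w', y ∈ A.τ q) ∧ q ∈ A.F

def lang (A : NrnrNFAwtl Q α) : Set (List α) := { w | A.Accepts w }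

def Deterministic (A : NrnrNFAwtl Q α) : Prop :=
  (∃ q₀, A.I = {q₀}) ∧ ∀ q a, (A.δ q a).Subsingleton

end NrnrNFAwtl

/-- Language classes. -/
def NFAwtlLangs (α : Type) [Fintype α] : Set (Set (List α)) :=
  { L | ∃ (Q : Type) (_ : Fintype Q) (A : NFAwtl Q α), A.lang = L }

def DFAwtlLangs (α : Type) [Fintype α] : Set (Set (List α)) :=
  { L | ∃ (Q : Type) (_ : Fintype Q) (A : NFAwtl Q α), A.Deterministic ∧ A.lang = L }

def RNFAwtlLangs (α : Type) [Fintype α] : Set (Set (List α)) :=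
  { L | ∃ (Q : Type) (_ : Fintype Q) (A : RNFAwtl Q α), A.lang = L }

def RDFAwtlLangs (α : Type) [Fintype α] : Set (Set (List α)) :=
  { L | ∃ (Q : Type) (_ : Fintype Q) (A : RNFAwtl Q α), A.Deterministic ∧ A.lang = L }

def NrNFAwtlLangs (α : Type) [Fintype α] : Set (Set (List α)) :=
  { L | ∃ (Q : Type) (_ : Fintype Q) (A : NrNFAwtl Q α), A.lang = L }

def NrDFAwtlLangs (α : Type) [Fintype α] : Set (Set (List α)) :=
  { L | ∃ (Q : Type) (_ : Fintype Q) (A : NrNFAwtl Q α), A.Deterministic ∧ A.lang = L }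

def NrnrNFAwtlLangs (α : Type) [Fintype α] : Set (Set (List α)) :=
  { L | ∃ (Q : Type) (_ : Fintype Q) (A : NrnrNFAwtl Q α), A.lang = L }

def NrnrDFAwtlLangs (α : Type) [Fintype α] : Set (Set (List α)) :=
  { L | ∃ (Q : Type) (_ : Fintype Q) (A : NrnrNFAwtl Q α), A.Deterministic ∧ A.lang = L }

/-- The three-letter alphabet {a, b, c}. -/
inductive Al : Type
  | a | b | c
deriving DecidableEq

instance : Fintype Al :=
  ⟨{Al.a, Al.b, Al.c}, fun x => by cases x <;> simp⟩

/-- The language L_{∨,c} = { w ∈ {a,b,c}* : |w|_c = 1, |w|_a = |w|_b }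
    ∪ { w ∈ {a,b}* : 2·|w|_a = |w|_b }. -/
def Lvc : Set (List Al) :=
  { w | w.count Al.c = 1 ∧ w.count Al.a = w.count Al.b } ∪
  { w | Al.c ∉ w ∧ 2 * w.count Al.a = w.count Al.b }

namespace Sep

def toR {Q α : Type} (A : NFAwtl Q α) : RNFAwtl Q α where
  τ := A.τ
  I := A.I
  δ := A.δ
  δend := fun _ => ∅
  Facc := A.F
  tr := A.tr
  accEnd := fun _ _ => rfl

lemma toR_step {Q α : Type} (A : NFAwtl Q α) (c c' : Q × List α) :
    (toR A).Step c c' ↔ A.Step c c' := by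
  constructor
  · rintro (h | ⟨-, h, -⟩)
    · exact h
    · exact absurd h (by simp [toR])
  · exact fun h => Or.inl h

lemma toR_lang {Q α : Type} (A : NFAwtl Q α) : (toR A).lang = A.lang := by
  have hstep : (toR A).Step = A.Step := by
    funext c c'; exact propext (toR_step A c c')
  ext w
  simp only [RNFAwtl.lang, NFAwtl.lang, RNFAwtl.Accepts, NFAwtl.Accepts, Set.mem_setOf_eq, hstep]
  rfl

lemma dfa_subset (α : Type) [Fintype α] : DFAwtlLangs α ⊆ RDFAwtlLangs α := by
  rintro L ⟨Q, ft, A, ⟨⟨q₀, hI⟩, hδ⟩, hlang⟩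
  exact ⟨Q, ft, toR A, ⟨⟨q₀, hI⟩, hδ, fun q => by simp [toR, Set.Subsingleton]⟩,
    by rw [toR_lang, hlang]⟩

end Sep
namespace Sep

open Al

inductive St : Type
  | s0 | e0 | e1 | d0 | d1 | d2 | fin
deriving DecidableEq

instance : Fintype St :=
  ⟨{St.s0, St.e0, St.e1, St.d0, St.d1, St.d2, St.fin}, fun x => by cases x <;> simp⟩

open St

def M : RNFAwtl St Al where
  τ q := match q with
    | s0 => {Al.a, Al.b}
    | e0 => {Al.b}
    | e1 => {Al.a}
    | d0 => {Al.b}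
    | d1 => {Al.a}
    | d2 => {Al.a}
    | fin => ∅
  I := {s0}
  δ q x := match q, x with
    | s0, Al.c => {e0}
    | e0, Al.a => {e1}
    | e1, Al.b => {e0}
    | d0, Al.a => {d1}
    | d1, Al.b => {d2}
    | d2, Al.b => {d0}
    | _, _ => ∅
  δend q := match q with
    | s0 => {d0}
    | e0 => {fin}
    | d0 => {fin}
    | _ => ∅
  Facc := {fin}
  tr := by
    intro q x h
    cases q <;> cases x <;> simp_all
  accEnd := by
    intro q h
    cases q <;> simp_all

lemma M_det : M.Deterministic := by
  refine ⟨⟨s0, rfl⟩, ?_, ?_⟩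
  · intro q x
    cases q <;> cases x <;> simp [M, Set.Subsingleton]
  · intro q
    cases q <;> simp [M, Set.Subsingleton]

/-- Backward invariant. -/
def G : St → List Al → Prop
  | s0, r => r ∈ Lvc
  | e0, r => Al.c ∉ r ∧ r.count Al.a = r.count Al.b
  | e1, r => Al.c ∉ r ∧ r.count Al.a + 1 = r.count Al.b
  | d0, r => Al.c ∉ r ∧ 2 * r.count Al.a = r.count Al.b
  | d1, r => Al.c ∉ r ∧ 2 * r.count Al.a + 2 = r.count Al.b
  | d2, r => Al.c ∉ r ∧ 2 * r.count Al.a + 1 = r.count Al.b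
  | fin, r => r = []

lemma step_back (q q' : St) (r r' : List Al) (h : M.Step (q, r) (q', r'))
    (hG : G q' r') : G q r := by
  rcases h with ⟨u, x, v, hw, hu, hx, hmem, hr'⟩ | ⟨hall, hmem, hr'⟩
  · simp only at hw hr' hmem
    subst hw hr'
    cases q <;> cases x <;>
      simp only [M, Set.mem_insert_iff, Set.mem_singleton_iff, Set.mem_empty_iff_false] at hmem hx hu <;>
      try exact absurd hmem (by exact id)
    -- remaining cases: (s0,c), (e0,a), (e1,b), (d0,a), (d1,b), (d2,b)
    all_goals subst hmem
    all_goals simp only [G, List.count_append, List.count_cons, List.mem_append, List.mem_cons] at hG ⊢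
    -- s0, c
    · refine Or.inl ⟨?_, ?_⟩
      · have hcu : u.count Al.c = 0 := List.count_eq_zero.mpr (fun hc => by
          rcases hu Al.c hc with h | h <;> exact absurd h (by simp))
        have hcv : v.count Al.c = 0 := List.count_eq_zero.mpr (fun hc => hG.1 (Or.inr hc))
        have hcu2 : u.count Al.c = 0 := hcu
        simp [hcu, hcv]
      · have := hG.2
        simp at this ⊢
        omega
    -- e0, a
    · obtain ⟨h1, h2⟩ := hG
      refine ⟨?_, by simp at h2 ⊢; omega⟩
      rintro (hc | hc | hc)
      · exact absurd (hu _ hc) (by simp)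
      · exact absurd hc (by simp)
      · exact h1 (Or.inr hc)
    -- e1, b
    · obtain ⟨h1, h2⟩ := hG
      refine ⟨?_, by simp at h2 ⊢; omega⟩
      rintro (hc | hc | hc)
      · exact absurd (hu _ hc) (by simp)
      · exact absurd hc (by simp)
      · exact h1 (Or.inr hc)
    -- d0, a
    · obtain ⟨h1, h2⟩ := hG
      refine ⟨?_, by simp at h2 ⊢; omega⟩
      rintro (hc | hc | hc)
      · exact absurd (hu _ hc) (by simp)
      · exact absurd hc (by simp)
      · exact h1 (Or.inr hc)
    -- d1, b
    · obtain ⟨h1, h2⟩ := hG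
      refine ⟨?_, by simp at h2 ⊢; omega⟩
      rintro (hc | hc | hc)
      · exact absurd (hu _ hc) (by simp)
      · exact absurd hc (by simp)
      · exact h1 (Or.inr hc)
    -- d2, b
    · obtain ⟨h1, h2⟩ := hG
      refine ⟨?_, by simp at h2 ⊢; omega⟩
      rintro (hc | hc | hc)
      · exact absurd (hu _ hc) (by simp)
      · exact absurd hc (by simp)
      · exact h1 (Or.inr hc)
  · simp only at hall hmem hr'
    subst hr'
    cases q <;>
      simp only [M, Set.mem_singleton_iff, Set.mem_empty_iff_false] at hmem <;>
      try exact absurd hmem (by exact id)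
    all_goals subst hmem
    -- s0 → d0
    · obtain ⟨h1, h2⟩ := hG
      exact Or.inr ⟨h1, h2⟩
    -- e0 → fin
    · subst hG; simp [G]
    -- d0 → fin
    · subst hG; simp [G]

end Sep
namespace Sep

open St

lemma al_cases (x : Al) (h : x ≠ Al.c) : x = Al.a ∨ x = Al.b := by cases x <;> simp_all

lemma split_first {S : Al → Prop} [DecidablePred S] :
    ∀ (r : List Al) (x : Al), x ∈ r → ¬ S x →
    ∃ u z v, r = u ++ z :: v ∧ (∀ y ∈ u, S y) ∧ ¬ S z := by
  intro r
  induction r with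
  | nil => intro x hx; simp at hx
  | cons h t ih =>
    intro x hx hS
    by_cases hSh : S h
    · have hxt : x ∈ t := by
        rcases List.mem_cons.mp hx with rfl | hxt
        · exact absurd hSh hS
        · exact hxt
      obtain ⟨u, z, v, h1, h2, h3⟩ := ih x hxt hS
      exact ⟨h :: u, z, v, by simp [h1], by
        intro y hy
        rcases List.mem_cons.mp hy with rfl | hy
        · exact hSh
        · exact h2 y hy, h3⟩
    · exact ⟨[], h, t, rfl, by simp, hSh⟩

lemma step_of (q q' : St) (x : Al) (u v : List Al)
    (hu : ∀ y ∈ u, y ∈ M.τ q) (hx : x ∉ M.τ q) (hq' : q' ∈ M.δ q x) :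
    M.Step (q, u ++ x :: v) (q', u ++ v) :=
  Or.inl ⟨u, x, v, rfl, hu, hx, hq', rfl⟩

lemma empty_of_counts (r : List Al) (hc : Al.c ∉ r) (ha : r.count Al.a = 0)
    (hb : r.count Al.b = 0) : r = [] := by
  refine List.eq_nil_iff_forall_not_mem.mpr fun x hx => ?_
  cases x
  · rw [List.count_eq_zero] at ha; exact ha hx
  · rw [List.count_eq_zero] at hb; exact hb hx
  · exact hc hx

lemma fin_step (q : St) (hq : q = e0 ∨ q = d0) (r : List Al) (hr : r = []) :
    M.Step (q, r) (fin, r) := by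
  subst hr
  refine Or.inr ⟨by simp, ?_, rfl⟩
  rcases hq with rfl | rfl <;> simp [M]

lemma Elem : ∀ (n : ℕ) (r : List Al), r.length ≤ n → Al.c ∉ r →
    r.count Al.a = r.count Al.b →
    Relation.ReflTransGen M.Step (e0, r) (fin, []) := by
  intro n
  induction n with
  | zero =>
    intro r hl hc hcnt
    have hr : r = [] := List.eq_nil_of_length_eq_zero (Nat.le_zero.mp hl)
    subst hr
    exact Relation.ReflTransGen.single (fin_step _ (Or.inl rfl) _ rfl)
  | succ n ih =>
    intro r hl hc hcnt
    by_cases hca : r.count Al.a = 0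
    · have hr : r = [] := empty_of_counts r hc hca (by omega)
      subst hr
      exact Relation.ReflTransGen.single (fin_step _ (Or.inl rfl) _ rfl)
    · have hain : Al.a ∈ r := by
        by_contra h; exact hca (List.count_eq_zero.mpr h)
      obtain ⟨u, z, v, hr, hu, hz⟩ :=
        split_first (S := fun y => y = Al.b) r Al.a hain (by simp)
      have hzr : z ∈ r := by rw [hr]; simp
      have hza : z = Al.a := by
        rcases al_cases z (fun h => hc (h ▸ hzr)) with h | h
        · exact h
        · exact absurd h hz
      subst hza hr
      have step1 : M.Step (e0, u ++ Al.a :: v) (e1, u ++ v) := by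
        refine step_of _ _ _ _ _ (fun y hy => by simp [M, hu y hy]) (by simp [M]) (by simp [M])
      have hc1 : Al.c ∉ u ++ v := by
        intro h; apply hc; simp at h ⊢; tauto
      have hcb : (u ++ v).count Al.b = (u ++ v).count Al.a + 1 := by
        simp [List.count_append, List.count_cons] at hcnt ⊢; omega
      have hbin : Al.b ∈ u ++ v := by
        by_contra h
        rw [List.count_eq_zero.mpr h] at hcb; omega
      obtain ⟨u', z', v', hr', hu', hz'⟩ :=
        split_first (S := fun y => y = Al.a) (u ++ v) Al.b hbin (by simp)
      have hzr' : z' ∈ u ++ v := by rw [hr']; simp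
      have hzb : z' = Al.b := by
        rcases al_cases z' (fun h => hc1 (h ▸ hzr')) with h | h
        · exact absurd h hz'
        · exact h
      subst hzb
      have step2 : M.Step (e1, u ++ v) (e0, u' ++ v') := by
        rw [hr']
        refine step_of _ _ _ _ _ (fun y hy => by simp [M, hu' y hy]) (by simp [M]) (by simp [M])
      have htail := ih (u' ++ v') (by
          have l1 : (u ++ Al.a :: v).length ≤ n + 1 := hl
          have l2 : (u ++ v).length = u'.length + v'.length + 1 := by rw [hr']; simp ; omega
          simp at l1 l2 ⊢; omega)
        (by intro h; apply hc1; rw [hr']; simp at h ⊢; tauto)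
        (by
          have := hcb
          rw [hr'] at this
          simp [List.count_append, List.count_cons] at this ⊢; omega)
      exact Relation.ReflTransGen.head step1 (Relation.ReflTransGen.head step2 htail)

lemma Dlem : ∀ (n : ℕ) (r : List Al), r.length ≤ n → Al.c ∉ r →
    2 * r.count Al.a = r.count Al.b →
    Relation.ReflTransGen M.Step (d0, r) (fin, []) := by
  intro n
  induction n with
  | zero =>
    intro r hl hc hcnt
    have hr : r = [] := List.eq_nil_of_length_eq_zero (Nat.le_zero.mp hl)
    subst hr
    exact Relation.ReflTransGen.single (fin_step _ (Or.inr rfl) _ rfl)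
  | succ n ih =>
    intro r hl hc hcnt
    by_cases hca : r.count Al.a = 0
    · have hr : r = [] := empty_of_counts r hc hca (by omega)
      subst hr
      exact Relation.ReflTransGen.single (fin_step _ (Or.inr rfl) _ rfl)
    · have hain : Al.a ∈ r := by
        by_contra h; exact hca (List.count_eq_zero.mpr h)
      obtain ⟨u, z, v, hr, hu, hz⟩ :=
        split_first (S := fun y => y = Al.b) r Al.a hain (by simp)
      have hzr : z ∈ r := by rw [hr]; simp
      have hza : z = Al.a := by
        rcases al_cases z (fun h => hc (h ▸ hzr)) with h | h
        · exact h
        · exact absurd h hz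
      subst hza hr
      have step1 : M.Step (d0, u ++ Al.a :: v) (d1, u ++ v) :=
        step_of _ _ _ _ _ (fun y hy => by simp [M, hu y hy]) (by simp [M]) (by simp [M])
      set r1 := u ++ v with hr1def
      have hc1 : Al.c ∉ r1 := by
        intro h; apply hc; simp [hr1def] at h ⊢; tauto
      have hcb1 : r1.count Al.b = 2 * r1.count Al.a + 2 := by
        simp [hr1def, List.count_append, List.count_cons] at hcnt ⊢; omega
      have hbin1 : Al.b ∈ r1 := by
        by_contra h; rw [List.count_eq_zero.mpr h] at hcb1; omega
      obtain ⟨u1, z1, v1, hrr1, hu1, hz1⟩ :=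
        split_first (S := fun y => y = Al.a) r1 Al.b hbin1 (by simp)
      have hzb1 : z1 = Al.b := by
        have hzr1 : z1 ∈ r1 := by rw [hrr1]; simp
        rcases al_cases z1 (fun h => hc1 (h ▸ hzr1)) with h | h
        · exact absurd h hz1
        · exact h
      subst hzb1
      have step2 : M.Step (d1, r1) (d2, u1 ++ v1) := by
        rw [hrr1]
        exact step_of _ _ _ _ _ (fun y hy => by simp [M, hu1 y hy]) (by simp [M]) (by simp [M])
      set r2 := u1 ++ v1 with hr2def
      have hc2 : Al.c ∉ r2 := by
        intro h; apply hc1; rw [hrr1]; simp [hr2def] at h ⊢; tauto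
      have hcb2 : r2.count Al.b = 2 * r2.count Al.a + 1 := by
        have := hcb1
        rw [hrr1] at this
        simp [hr2def, List.count_append, List.count_cons] at this ⊢; omega
      have hbin2 : Al.b ∈ r2 := by
        by_contra h; rw [List.count_eq_zero.mpr h] at hcb2; omega
      obtain ⟨u2, z2, v2, hrr2, hu2, hz2⟩ :=
        split_first (S := fun y => y = Al.a) r2 Al.b hbin2 (by simp)
      have hzb2 : z2 = Al.b := by
        have hzr2 : z2 ∈ r2 := by rw [hrr2]; simp
        rcases al_cases z2 (fun h => hc2 (h ▸ hzr2)) with h | h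
        · exact absurd h hz2
        · exact h
      subst hzb2
      have step3 : M.Step (d2, r2) (d0, u2 ++ v2) := by
        rw [hrr2]
        exact step_of _ _ _ _ _ (fun y hy => by simp [M, hu2 y hy]) (by simp [M]) (by simp [M])
      have htail := ih (u2 ++ v2) (by
          have l1 : (u ++ Al.a :: v).length ≤ n + 1 := hl
          have l2 : r1.length = u1.length + v1.length + 1 := by rw [hrr1]; simp ; omega
          have l3 : r2.length = u2.length + v2.length + 1 := by rw [hrr2]; simp ; omega
          simp [hr1def, hr2def] at l1 l2 l3 ⊢; omega)
        (by intro h; apply hc2; rw [hrr2]; simp at h ⊢; tauto)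
        (by
          have := hcb2
          rw [hrr2] at this
          simp [List.count_append, List.count_cons] at this ⊢; omega)
      exact (Relation.ReflTransGen.head step1
        (Relation.ReflTransGen.head step2 (Relation.ReflTransGen.head step3 htail)))

lemma M_lang : M.lang = Lvc := by
  ext w
  constructor
  · rintro ⟨q₀, hq₀, q, w', hrtg, htr, hF⟩
    have hq0 : q₀ = s0 := by simpa [M] using hq₀
    have hqf : q = fin := by simpa [M] using hF
    subst hq0 hqf
    have hw' : w' = [] := by
      refine List.eq_nil_iff_forall_not_mem.mpr fun x hx => ?_
      have := htr x hx
      simp [M] at this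
    have hG : G fin w' := hw'
    have key : ∀ cfg cfg' : St × List Al, Relation.ReflTransGen M.Step cfg cfg' →
        G cfg'.1 cfg'.2 → G cfg.1 cfg.2 := by
      intro cfg cfg' h
      induction h using Relation.ReflTransGen.head_induction_on with
      | refl => exact fun h => h
      | head hs _ ih =>
        exact fun hgoal => step_back _ _ _ _ (by simpa using hs) (ih hgoal)
    exact key (s0, w) (fin, w') hrtg hG
  · rintro (⟨hc1, hcnt⟩ | ⟨hc, hcnt⟩)
    · -- one c, equal counts
      have hcin : Al.c ∈ w := by
        by_contra h
        rw [List.count_eq_zero.mpr h] at hc1; omega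
      obtain ⟨u, z, v, hr, hu, hz⟩ :=
        split_first (S := fun y => ¬ y = Al.c) w Al.c hcin (by simp)
      have hzc : z = Al.c := by simpa using hz
      subst hzc
      have step1 : M.Step (s0, w) (e0, u ++ v) := by
        rw [hr]
        refine step_of _ _ _ _ _ (fun y hy => ?_) (by simp [M]) (by simp [M])
        rcases al_cases y (hu y hy) with h | h <;> simp [M, h]
      have hcuv : Al.c ∉ u ++ v := by
        rw [hr] at hc1
        intro h
        have hu0 : u.count Al.c = 0 := List.count_eq_zero.mpr (fun hcc => hu Al.c hcc rfl)
        simp [List.count_append, List.count_cons] at hc1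
        rcases List.mem_append.mp h with h | h
        · exact (hu Al.c h) rfl
        · have := List.count_pos_iff.mpr h
          omega
      have hcnt' : (u ++ v).count Al.a = (u ++ v).count Al.b := by
        rw [hr] at hcnt
        simp [List.count_append, List.count_cons] at hcnt ⊢; omega
      refine ⟨s0, by simp [M], fin, [], Relation.ReflTransGen.head step1
        (Elem (u ++ v).length _ le_rfl hcuv hcnt'), by simp, by simp [M]⟩
    · -- no c, doubled counts
      have step1 : M.Step (s0, w) (d0, w) := by
        refine Or.inr ⟨fun x hx => ?_, by simp [M], rfl⟩
        rcases al_cases x (fun h => hc (h ▸ hx)) with h | h <;> simp [M, h]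
      refine ⟨s0, by simp [M], fin, [], Relation.ReflTransGen.head step1
        (Dlem w.length _ le_rfl hc hcnt), by simp, by simp [M]⟩

lemma Lvc_mem_R : Lvc ∈ RDFAwtlLangs Al :=
  ⟨St, inferInstance, M, M_det, M_lang⟩

end Sep
namespace Sep

/-! ### Lower bound: no DFAwtl accepts Lvc -/

def W (i j : ℕ) : List Al := List.replicate i Al.a ++ List.replicate j Al.b

lemma W_succ_a (i j : ℕ) : W (i + 1) j = Al.a :: W i j := by
  simp [W, List.replicate_succ]

lemma W_a_mem {i : ℕ} (j : ℕ) (hi : 0 < i) : Al.a ∈ W i j := by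
  simp [W, List.mem_append, List.mem_replicate]
  omega

lemma W_b_mem (i : ℕ) {j : ℕ} (hj : 0 < j) : Al.b ∈ W i j := by
  simp [W, List.mem_append, List.mem_replicate]
  omega

lemma W_split_b (i j : ℕ) (hj : 0 < j) :
    W i j = List.replicate i Al.a ++ Al.b :: List.replicate (j - 1) Al.b := by
  obtain ⟨j', rfl⟩ : ∃ j', j = j' + 1 := ⟨j - 1, by omega⟩
  simp [W, List.replicate_succ]

variable {Q : Type}

open Classical in
noncomputable def dd (A : NFAwtl Q Al) (q : Q) (x : Al) : Option Q :=
  if h : ∃ p, p ∈ A.δ q x then some h.choose else none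

lemma dd_mem (A : NFAwtl Q Al) (hdet : ∀ q x, (A.δ q x).Subsingleton)
    (q : Q) (x : Al) (p : Q) : p ∈ A.δ q x ↔ dd A q x = some p := by
  unfold dd
  haveI := Classical.dec
  constructor
  · intro hp
    rw [dif_pos ⟨p, hp⟩]
    exact congrArg some (hdet q x (Exists.choose_spec ⟨p, hp⟩) hp)
  · intro h
    by_cases hq : ∃ p', p' ∈ A.δ q x
    · rw [dif_pos hq] at h
      have := Option.some_injective _ h
      exact this ▸ hq.choose_spec
    · rw [dif_neg hq] at h
      exact absurd h (by simp)

open Classical in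
noncomputable def runAB (A : NFAwtl Q Al) : Q → ℕ → ℕ → Option (Q × ℕ × ℕ)
  | q, i, j =>
    if h1 : Al.a ∉ A.τ q ∧ 0 < i then
      (dd A q Al.a).bind fun p => runAB A p (i - 1) j
    else if h2 : Al.b ∉ A.τ q ∧ 0 < j then
      (dd A q Al.b).bind fun p => runAB A p i (j - 1)
    else some (q, i, j)
termination_by q i j => i + j
decreasing_by
  · obtain ⟨-, h⟩ := h1; omega
  · obtain ⟨-, h⟩ := h2; omega

lemma runAB_a (A : NFAwtl Q Al) {q : Q} (h : Al.a ∉ A.τ q) {i : ℕ} (hi : 0 < i) (j : ℕ) :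
    runAB A q i j = (dd A q Al.a).bind fun p => runAB A p (i - 1) j := by
  rw [runAB, dif_pos ⟨h, hi⟩]

lemma runAB_b (A : NFAwtl Q Al) {q : Q} (h1 : Al.a ∈ A.τ q ∨ i = 0)
    (h : Al.b ∉ A.τ q) {j : ℕ} (hj : 0 < j) :
    runAB A q i j = (dd A q Al.b).bind fun p => runAB A p i (j - 1) := by
  rw [runAB, dif_neg, dif_pos ⟨h, hj⟩]
  rintro ⟨ha, hi⟩
  rcases h1 with h1 | h1
  · exact ha h1
  · omega

lemma runAB_halt (A : NFAwtl Q Al) {q : Q} (h1 : Al.a ∈ A.τ q ∨ i = 0)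
    (h2 : Al.b ∈ A.τ q ∨ j = 0) : runAB A q i j = some (q, i, j) := by
  rw [runAB, dif_neg, dif_neg]
  · rintro ⟨hb, hj⟩
    rcases h2 with h2 | h2
    · exact hb h2
    · omega
  · rintro ⟨ha, hi⟩
    rcases h1 with h1 | h1
    · exact ha h1
    · omega

lemma runAB_spec (A : NFAwtl Q Al) :
    ∀ (N : ℕ) (q : Q) (i j : ℕ) (r : Q × ℕ × ℕ), i + j ≤ N →
      runAB A q i j = some r →
      (Al.a ∈ A.τ r.1 ∨ r.2.1 = 0) ∧ (Al.b ∈ A.τ r.1 ∨ r.2.2 = 0) := by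
  intro N
  induction N with
  | zero =>
    intro q i j r hN h
    have hi : i = 0 := by omega
    have hj : j = 0 := by omega
    subst hi hj
    rw [runAB_halt A (Or.inr rfl) (Or.inr rfl)] at h
    cases h
    simp
  | succ N ih =>
    intro q i j r hN h
    by_cases ha : Al.a ∉ A.τ q ∧ 0 < i
    · rw [runAB_a A ha.1 ha.2] at h
      cases hda : dd A q Al.a with
      | none => rw [hda] at h; simp at h
      | some p =>
        rw [hda] at h
        simp only [Option.bind_some] at h
        exact ih p (i - 1) j r (by omega) h
    · have ha' : Al.a ∈ A.τ q ∨ i = 0 := by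
        by_contra hc
        push_neg at hc
        exact ha ⟨hc.1, by omega⟩
      by_cases hb : Al.b ∉ A.τ q ∧ 0 < j
      · rw [runAB_b A ha' hb.1 hb.2] at h
        cases hdb : dd A q Al.b with
        | none => rw [hdb] at h; simp at h
        | some p =>
          rw [hdb] at h
          simp only [Option.bind_some] at h
          exact ih p i (j - 1) r (by omega) h
      · have hb' : Al.b ∈ A.τ q ∨ j = 0 := by
          by_contra hc
          push_neg at hc
          exact hb ⟨hc.1, by omega⟩
        rw [runAB_halt A ha' hb'] at h
        cases h
        exact ⟨ha', hb'⟩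

lemma nstep_of (A : NFAwtl Q Al) (q p : Q) (x : Al) (u v : List Al)
    (hu : ∀ y ∈ u, y ∈ A.τ q) (hx : x ∉ A.τ q) (hp : p ∈ A.δ q x) :
    A.Step (q, u ++ x :: v) (p, u ++ v) :=
  ⟨u, x, v, rfl, hu, hx, hp, rfl⟩

lemma runAB_sound (A : NFAwtl Q Al) (hdet : ∀ q x, (A.δ q x).Subsingleton) (t : List Al) :
    ∀ (N : ℕ) (q : Q) (i j : ℕ) (r : Q × ℕ × ℕ), i + j ≤ N →
      runAB A q i j = some r →
      Relation.ReflTransGen A.Step (q, W i j ++ t) (r.1, W r.2.1 r.2.2 ++ t) := by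
  intro N
  induction N with
  | zero =>
    intro q i j r hN h
    have hi : i = 0 := by omega
    have hj : j = 0 := by omega
    subst hi hj
    rw [runAB_halt A (Or.inr rfl) (Or.inr rfl)] at h
    cases h
    exact Relation.ReflTransGen.refl
  | succ N ih =>
    intro q i j r hN h
    by_cases ha : Al.a ∉ A.τ q ∧ 0 < i
    · rw [runAB_a A ha.1 ha.2] at h
      cases hda : dd A q Al.a with
      | none => rw [hda] at h; simp at h
      | some p =>
        rw [hda] at h
        simp only [Option.bind_some] at h
        have hstep : A.Step (q, W i j ++ t) (p, W (i - 1) j ++ t) := by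
          obtain ⟨i', rfl⟩ : ∃ i', i = i' + 1 := ⟨i - 1, by omega⟩
          have := nstep_of A q p Al.a [] (W i' j ++ t) (by simp) ha.1
            ((dd_mem A hdet q Al.a p).mpr hda)
          simpa [W_succ_a] using this
        exact Relation.ReflTransGen.head hstep (ih p (i - 1) j r (by omega) h)
    · have ha' : Al.a ∈ A.τ q ∨ i = 0 := by
        by_contra hc; push_neg at hc; exact ha ⟨hc.1, by omega⟩
      by_cases hb : Al.b ∉ A.τ q ∧ 0 < j
      · rw [runAB_b A ha' hb.1 hb.2] at h
        cases hdb : dd A q Al.b with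
        | none => rw [hdb] at h; simp at h
        | some p =>
          rw [hdb] at h
          simp only [Option.bind_some] at h
          have hstep : A.Step (q, W i j ++ t) (p, W i (j - 1) ++ t) := by
            have hu : ∀ y ∈ List.replicate i Al.a, y ∈ A.τ q := by
              intro y hy
              have hya := List.eq_of_mem_replicate hy
              subst hya
              rcases ha' with h' | h'
              · exact h'
              · subst h'; simp at hy
            have := nstep_of A q p Al.b (List.replicate i Al.a)
              (List.replicate (j - 1) Al.b ++ t) hu hb.1
              ((dd_mem A hdet q Al.b p).mpr hdb)
            have e1 : W i j ++ t =
                List.replicate i Al.a ++ Al.b :: (List.replicate (j - 1) Al.b ++ t) := by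
              rw [W_split_b i j hb.2]; simp
            have e2 : W i (j - 1) ++ t =
                List.replicate i Al.a ++ (List.replicate (j - 1) Al.b ++ t) := by
              simp [W]
            rw [e1, e2]
            exact this
          exact Relation.ReflTransGen.head hstep (ih p i (j - 1) r (by omega) h)
      · have hb' : Al.b ∈ A.τ q ∨ j = 0 := by
          by_contra hc; push_neg at hc; exact hb ⟨hc.1, by omega⟩
        rw [runAB_halt A ha' hb'] at h
        cases h
        exact Relation.ReflTransGen.refl

end Sep
namespace Sep

variable {Q : Type}

lemma Wdecomp (A : NFAwtl Q Al) (q : Q) :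
    ∀ (i : ℕ) (j : ℕ) (u v : List Al) (x : Al), W i j = u ++ x :: v →
      (x = Al.a ∧ 0 < i ∧ u ++ v = W (i - 1) j ∧ ∀ y ∈ u, y = Al.a) ∨
      (x = Al.b ∧ 0 < j ∧ u ++ v = W i (j - 1) ∧ (0 < i → Al.a ∈ u)) := by
  intro i
  induction i with
  | zero =>
    intro j u v x hw
    right
    simp only [W, List.replicate_zero, List.nil_append] at hw ⊢
    have hx : x = Al.b := by
      have : x ∈ List.replicate j Al.b := by rw [hw]; simp
      exact List.eq_of_mem_replicate this
    have hj : 0 < j := by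
      rcases Nat.eq_zero_or_pos j with h | h
      · subst h; simp at hw
      · exact h
    refine ⟨hx, hj, ?_, by omega⟩
    have hu : u = List.replicate u.length Al.b := by
      refine List.eq_replicate_of_mem fun y hy => ?_
      have : y ∈ List.replicate j Al.b := by rw [hw]; exact List.mem_append_left _ hy
      exact List.eq_of_mem_replicate this
    have hv : v = List.replicate v.length Al.b := by
      refine List.eq_replicate_of_mem fun y hy => ?_
      have : y ∈ List.replicate j Al.b := by
        rw [hw]; exact List.mem_append_right _ (List.mem_cons_of_mem _ hy)
      exact List.eq_of_mem_replicate this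
    have hlen : j = u.length + v.length + 1 := by
      have := congrArg List.length hw
      simp at this; omega
    rw [hu, hv, ← List.replicate_add]
    congr 1
    omega
  | succ i' ih =>
    intro j u v x hw
    rw [W_succ_a] at hw
    cases u with
    | nil =>
      simp only [List.nil_append, List.cons.injEq] at hw
      obtain ⟨rfl, rfl⟩ := hw
      left
      exact ⟨rfl, by omega, by simp, by simp⟩
    | cons y u' =>
      simp only [List.cons_append, List.cons.injEq] at hw
      obtain ⟨rfl, hw'⟩ := hw
      rcases ih j u' v x hw' with ⟨rfl, hi, he, hall⟩ | ⟨rfl, hj, he, hia⟩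
      · left
        refine ⟨rfl, by omega, ?_, ?_⟩
        · have : W i' j = Al.a :: W (i' - 1) j := by
            obtain ⟨k, rfl⟩ : ∃ k, i' = k + 1 := ⟨i' - 1, by omega⟩
            simp [W_succ_a]
          simp only [List.cons_append, he, Nat.add_sub_cancel]
          rw [← this]
        · intro y hy
          rcases List.mem_cons.mp hy with rfl | hy
          · rfl
          · exact hall y hy
      · right
        refine ⟨rfl, hj, ?_, fun _ => List.mem_cons_self⟩
        simp only [List.cons_append, he]
        rw [← W_succ_a]

lemma stepW (A : NFAwtl Q Al) (q : Q) (i j : ℕ) (c' : Q × List Al)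
    (h : A.Step (q, W i j) c') :
    (Al.a ∉ A.τ q ∧ 0 < i ∧ c'.1 ∈ A.δ q Al.a ∧ c'.2 = W (i - 1) j) ∨
    ((Al.a ∈ A.τ q ∨ i = 0) ∧ Al.b ∉ A.τ q ∧ 0 < j ∧ c'.1 ∈ A.δ q Al.b ∧
      c'.2 = W i (j - 1)) := by
  obtain ⟨u, x, v, hw, hu, hx, hm, hc2⟩ := h
  simp only at hw hu hx hm hc2
  rcases Wdecomp A q i j u v x hw with ⟨rfl, hi, he, -⟩ | ⟨rfl, hj, he, hia⟩
  · exact Or.inl ⟨hx, hi, hm, by rw [hc2, he]⟩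
  · refine Or.inr ⟨?_, hx, hj, hm, by rw [hc2, he]⟩
    rcases Nat.eq_zero_or_pos i with h | h
    · exact Or.inr h
    · exact Or.inl (hu Al.a (hia h))

lemma snoc_decomp (l : List Al) (e : Al) (u v : List Al) (x : Al)
    (h : l ++ [e] = u ++ x :: v) :
    (u = l ∧ x = e ∧ v = []) ∨ (∃ v', v = v' ++ [e] ∧ l = u ++ x :: v') := by
  rcases List.eq_nil_or_concat v with rfl | ⟨v', e', rfl⟩
  · left
    have hlen : l.length = u.length := by
      have := congrArg List.length h
      simp at this; omega
    obtain ⟨h1, h2⟩ := List.append_inj h (by omega)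
    simp at h2
    exact ⟨h1.symm, h2.symm, rfl⟩
  · right
    have h' : l ++ [e] = (u ++ x :: v') ++ [e'] := by simp [h]
    obtain ⟨h1, h2⟩ := List.append_inj h' (by
      have := congrArg List.length h'
      simp at this ⊢; omega)
    simp at h2
    exact ⟨v', by rw [List.concat_eq_append, h2], h1⟩

lemma stepWc (A : NFAwtl Q Al) (q : Q) (i j : ℕ) (c' : Q × List Al)
    (h : A.Step (q, W i j ++ [Al.c]) c') :
    (Al.a ∉ A.τ q ∧ 0 < i ∧ c'.1 ∈ A.δ q Al.a ∧ c'.2 = W (i - 1) j ++ [Al.c]) ∨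
    ((Al.a ∈ A.τ q ∨ i = 0) ∧ Al.b ∉ A.τ q ∧ 0 < j ∧ c'.1 ∈ A.δ q Al.b ∧
      c'.2 = W i (j - 1) ++ [Al.c]) ∨
    ((Al.a ∈ A.τ q ∨ i = 0) ∧ (Al.b ∈ A.τ q ∨ j = 0) ∧ Al.c ∉ A.τ q ∧
      c'.1 ∈ A.δ q Al.c ∧ c'.2 = W i j) := by
  obtain ⟨u, x, v, hw, hu, hx, hm, hc2⟩ := h
  simp only at hw hu hx hm hc2
  rcases snoc_decomp (W i j) Al.c u v x hw with ⟨rfl, rfl, rfl⟩ | ⟨v', rfl, hw'⟩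
  · right; right
    refine ⟨?_, ?_, hx, hm, by simp [hc2]⟩
    · rcases Nat.eq_zero_or_pos i with h | h
      · exact Or.inr h
      · exact Or.inl (hu Al.a (W_a_mem j h))
    · rcases Nat.eq_zero_or_pos j with h | h
      · exact Or.inr h
      · exact Or.inl (hu Al.b (W_b_mem i h))
  · rcases Wdecomp A q i j u v' x hw' with ⟨rfl, hi, he, -⟩ | ⟨rfl, hj, he, hia⟩
    · left
      refine ⟨hx, hi, hm, ?_⟩
      rw [hc2, ← List.append_assoc, he]
    · refine Or.inr (Or.inl ⟨?_, hx, hj, hm, ?_⟩)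
      · rcases Nat.eq_zero_or_pos i with h | h
        · exact Or.inr h
        · exact Or.inl (hu Al.a (hia h))
      · rw [hc2, ← List.append_assoc, he]

/-- Halting of `runAB` when the start configuration is all-translucent. -/
lemma runAB_halt_of_transl (A : NFAwtl Q Al) (q : Q) (i j : ℕ)
    (h : ∀ x ∈ W i j, x ∈ A.τ q) : runAB A q i j = some (q, i, j) := by
  refine runAB_halt A ?_ ?_
  · rcases Nat.eq_zero_or_pos i with hi | hi
    · exact Or.inr hi
    · exact Or.inl (h Al.a (W_a_mem j hi))
  · rcases Nat.eq_zero_or_pos j with hj | hj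
    · exact Or.inr hj
    · exact Or.inl (h Al.b (W_b_mem i hj))

lemma runAB_complete (A : NFAwtl Q Al) (hdet : ∀ q x, (A.δ q x).Subsingleton) :
    ∀ (N : ℕ) (q : Q) (i j : ℕ) (q₂ : Q) (w₂ : List Al), i + j ≤ N →
      Relation.ReflTransGen A.Step (q, W i j) (q₂, w₂) →
      (∀ x ∈ w₂, x ∈ A.τ q₂) →
      ∃ i₂ j₂, w₂ = W i₂ j₂ ∧ runAB A q i j = some (q₂, i₂, j₂) := by
  intro N
  induction N with
  | zero =>
    intro q i j q₂ w₂ hN hrtg htr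
    have hi : i = 0 := by omega
    have hj : j = 0 := by omega
    subst hi hj
    rcases Relation.ReflTransGen.cases_head hrtg with heq | ⟨c, hstep, -⟩
    · cases heq
      exact ⟨0, 0, rfl, runAB_halt A (Or.inr rfl) (Or.inr rfl)⟩
    · rcases stepW A q 0 0 c hstep with ⟨-, h, -⟩ | ⟨-, -, h, -⟩ <;> omega
  | succ N ih =>
    intro q i j q₂ w₂ hN hrtg htr
    rcases Relation.ReflTransGen.cases_head hrtg with heq | ⟨c, hstep, hrest⟩
    · cases heq
      exact ⟨i, j, rfl, runAB_halt_of_transl A q i j htr⟩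
    · rcases stepW A q i j c hstep with ⟨ha, hi, hm, he⟩ | ⟨ha', hb, hj, hm, he⟩
      · obtain ⟨p, w⟩ := c
        simp only at hm he
        subst he
        obtain ⟨i₂, j₂, rfl, hr⟩ := ih p (i - 1) j q₂ w₂ (by omega) hrest htr
        refine ⟨i₂, j₂, rfl, ?_⟩
        rw [runAB_a A ha hi, (dd_mem A hdet q Al.a p).mp hm]
        simpa using hr
      · obtain ⟨p, w⟩ := c
        simp only at hm he
        subst he
        obtain ⟨i₂, j₂, rfl, hr⟩ := ih p i (j - 1) q₂ w₂ (by omega) hrest htr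
        refine ⟨i₂, j₂, rfl, ?_⟩
        rw [runAB_b A ha' hb hj, (dd_mem A hdet q Al.b p).mp hm]
        simpa using hr

end Sep
namespace Sep

variable {Q : Type}

noncomputable def accAB (A : NFAwtl Q Al) (q : Q) (i j : ℕ) : Prop :=
  ∃ r, runAB A q i j = some r ∧ r.1 ∈ A.F

noncomputable def accC (A : NFAwtl Q Al) (q : Q) (i j : ℕ) : Prop :=
  ∃ r, runAB A q i j = some r ∧
    ((Al.c ∈ A.τ r.1 ∧ r.1 ∈ A.F) ∨
     (Al.c ∉ A.τ r.1 ∧ ∃ p, dd A r.1 Al.c = some p ∧ accAB A p r.2.1 r.2.2))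

lemma W_transl_of_spec (A : NFAwtl Q Al) (q : Q) (i j : ℕ)
    (h1 : Al.a ∈ A.τ q ∨ i = 0) (h2 : Al.b ∈ A.τ q ∨ j = 0) :
    ∀ x ∈ W i j, x ∈ A.τ q := by
  intro x hx
  simp only [W, List.mem_append, List.mem_replicate] at hx
  rcases hx with ⟨hi, rfl⟩ | ⟨hj, rfl⟩
  · rcases h1 with h | h
    · exact h
    · omega
  · rcases h2 with h | h
    · exact h
    · omega

lemma accW_iff (A : NFAwtl Q Al) (hdet : ∀ q x, (A.δ q x).Subsingleton)
    (q0 : Q) (hI : A.I = {q0}) (n m : ℕ) :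
    A.Accepts (W n m) ↔ accAB A q0 n m := by
  constructor
  · rintro ⟨q₀', hq₀', q₂, w₂, hrtg, htr, hF⟩
    have hq : q₀' = q0 := by rw [hI] at hq₀'; exact hq₀'
    rw [hq] at hrtg
    obtain ⟨i₂, j₂, rfl, hr⟩ := runAB_complete A hdet (n + m) q0 n m q₂ w₂ le_rfl hrtg htr
    exact ⟨(q₂, i₂, j₂), hr, hF⟩
  · rintro ⟨r, hr, hF⟩
    have hrtg := runAB_sound A hdet [] (n + m) q0 n m r le_rfl hr
    simp only [List.append_nil] at hrtg
    have hspec := runAB_spec A (n + m) q0 n m r le_rfl hr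
    exact ⟨q0, by rw [hI]; rfl, r.1, W r.2.1 r.2.2, hrtg,
      W_transl_of_spec A r.1 r.2.1 r.2.2 hspec.1 hspec.2, hF⟩

lemma runC_complete (A : NFAwtl Q Al) (hdet : ∀ q x, (A.δ q x).Subsingleton) :
    ∀ (N : ℕ) (q : Q) (i j : ℕ) (q₂ : Q) (w₂ : List Al), i + j ≤ N →
      Relation.ReflTransGen A.Step (q, W i j ++ [Al.c]) (q₂, w₂) →
      (∀ x ∈ w₂, x ∈ A.τ q₂) → q₂ ∈ A.F →
      accC A q i j := by
  intro N
  induction N with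
  | zero =>
    intro q i j q₂ w₂ hN hrtg htr hF
    have hi : i = 0 := by omega
    have hj : j = 0 := by omega
    subst hi hj
    rcases Relation.ReflTransGen.cases_head hrtg with heq | ⟨c, hstep, hrest⟩
    · cases heq
      refine ⟨(q, 0, 0), runAB_halt A (Or.inr rfl) (Or.inr rfl), Or.inl ⟨?_, hF⟩⟩
      exact htr Al.c (by simp [W])
    · rcases stepWc A q 0 0 c hstep with ⟨-, h, -⟩ | ⟨-, -, h, -⟩ | ⟨-, -, hc, hm, he⟩
      · omega
      · omega
      · obtain ⟨p, w⟩ := c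
        simp only at hm he
        subst he
        have hhalt : runAB A q 0 0 = some (q, 0, 0) := runAB_halt A (Or.inr rfl) (Or.inr rfl)
        obtain ⟨i₂, j₂, rfl, hr⟩ := runAB_complete A hdet 0 p 0 0 q₂ w₂ le_rfl hrest htr
        exact ⟨(q, 0, 0), hhalt, Or.inr ⟨hc, p, (dd_mem A hdet q Al.c p).mp hm,
          ⟨(q₂, i₂, j₂), hr, hF⟩⟩⟩
  | succ N ih =>
    intro q i j q₂ w₂ hN hrtg htr hF
    rcases Relation.ReflTransGen.cases_head hrtg with heq | ⟨c, hstep, hrest⟩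
    · cases heq
      have htrW : ∀ x ∈ W i j, x ∈ A.τ q := fun x hx => htr x (List.mem_append_left _ hx)
      refine ⟨(q, i, j), runAB_halt_of_transl A q i j htrW, Or.inl ⟨?_, hF⟩⟩
      exact htr Al.c (by simp)
    · rcases stepWc A q i j c hstep with ⟨ha, hi, hm, he⟩ | ⟨ha', hb, hj, hm, he⟩ |
        ⟨ha', hb', hc, hm, he⟩
      · obtain ⟨p, w⟩ := c
        simp only at hm he
        subst he
        obtain ⟨r, hr, hφ⟩ := ih p (i - 1) j q₂ w₂ (by omega) hrest htr hF
        refine ⟨r, ?_, hφ⟩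
        rw [runAB_a A ha hi, (dd_mem A hdet q Al.a p).mp hm]
        simpa using hr
      · obtain ⟨p, w⟩ := c
        simp only at hm he
        subst he
        obtain ⟨r, hr, hφ⟩ := ih p i (j - 1) q₂ w₂ (by omega) hrest htr hF
        refine ⟨r, ?_, hφ⟩
        rw [runAB_b A ha' hb hj, (dd_mem A hdet q Al.b p).mp hm]
        simpa using hr
      · obtain ⟨p, w⟩ := c
        simp only at hm he
        subst he
        obtain ⟨i₂, j₂, rfl, hr⟩ :=
          runAB_complete A hdet (i + j) p i j q₂ w₂ le_rfl hrest htr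
        exact ⟨(q, i, j), runAB_halt A ha' hb', Or.inr ⟨hc, p,
          (dd_mem A hdet q Al.c p).mp hm, ⟨(q₂, i₂, j₂), hr, hF⟩⟩⟩

lemma accC_iff (A : NFAwtl Q Al) (hdet : ∀ q x, (A.δ q x).Subsingleton)
    (q0 : Q) (hI : A.I = {q0}) (n m : ℕ) :
    A.Accepts (W n m ++ [Al.c]) ↔ accC A q0 n m := by
  constructor
  · rintro ⟨q₀', hq₀', q₂, w₂, hrtg, htr, hF⟩
    have hq : q₀' = q0 := by rw [hI] at hq₀'; exact hq₀'
    rw [hq] at hrtg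
    exact runC_complete A hdet (n + m) q0 n m q₂ w₂ le_rfl hrtg htr hF
  · rintro ⟨r, hr, hφ⟩
    obtain ⟨q₁, i₁, j₁⟩ := r
    have hrtg1 := runAB_sound A hdet [Al.c] (n + m) q0 n m (q₁, i₁, j₁) le_rfl hr
    have hspec := runAB_spec A (n + m) q0 n m (q₁, i₁, j₁) le_rfl hr
    simp only at hrtg1 hspec
    have htrW : ∀ x ∈ W i₁ j₁, x ∈ A.τ q₁ :=
      W_transl_of_spec A q₁ i₁ j₁ hspec.1 hspec.2
    rcases hφ with ⟨hcτ, hF⟩ | ⟨hcτ, p, hdd, ⟨r₂, hr₂, hF₂⟩⟩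
    · refine ⟨q0, by rw [hI]; rfl, q₁, W i₁ j₁ ++ [Al.c], hrtg1, ?_, hF⟩
      intro x hx
      rcases List.mem_append.mp hx with hx | hx
      · exact htrW x hx
      · simp at hx
        subst hx
        exact hcτ
    · have hstep : A.Step (q₁, W i₁ j₁ ++ [Al.c]) (p, W i₁ j₁) := by
        have := nstep_of A q₁ p Al.c (W i₁ j₁) [] htrW hcτ
          ((dd_mem A hdet q₁ Al.c p).mpr hdd)
        simpa using this
      have hrtg2 := runAB_sound A hdet [] (i₁ + j₁) p i₁ j₁ r₂ le_rfl hr₂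
      simp only [List.append_nil] at hrtg2
      have hspec2 := runAB_spec A (i₁ + j₁) p i₁ j₁ r₂ le_rfl hr₂
      refine ⟨q0, by rw [hI]; rfl, r₂.1, W r₂.2.1 r₂.2.2,
        hrtg1.trans (Relation.ReflTransGen.head hstep hrtg2),
        W_transl_of_spec A r₂.1 r₂.2.1 r₂.2.2 hspec2.1 hspec2.2, hF₂⟩

end Sep
namespace Sep

variable {Q : Type}

open Classical in
noncomputable def phi (A : NFAwtl Q Al) (q : Q) : Option Q :=
  if Al.a ∈ A.τ q then (if Al.b ∈ A.τ q then none else dd A q Al.b) else dd A q Al.a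

noncomputable def psi (A : NFAwtl Q Al) (q0 : Q) (q : Q) : Q := (phi A q).getD q0

noncomputable def pstate (A : NFAwtl Q Al) (q0 : Q) (t : ℕ) : Q := (psi A q0)^[t] q0

open Classical in
noncomputable def cA (A : NFAwtl Q Al) (q0 : Q) : ℕ → ℕ
  | 0 => 0
  | t + 1 => cA A q0 t + (if Al.a ∈ A.τ (pstate A q0 t) then 0 else 1)

open Classical in
noncomputable def cB (A : NFAwtl Q Al) (q0 : Q) : ℕ → ℕ
  | 0 => 0
  | t + 1 => cB A q0 t + (if Al.a ∈ A.τ (pstate A q0 t) then 1 else 0)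

variable (A : NFAwtl Q Al) (q0 : Q)

lemma cA_succ_pos {t : ℕ} (h : Al.a ∈ A.τ (pstate A q0 t)) :
    cA A q0 (t + 1) = cA A q0 t := by simp [cA, h]

lemma cA_succ_neg {t : ℕ} (h : Al.a ∉ A.τ (pstate A q0 t)) :
    cA A q0 (t + 1) = cA A q0 t + 1 := by simp [cA, h]

lemma cB_succ_pos {t : ℕ} (h : Al.a ∈ A.τ (pstate A q0 t)) :
    cB A q0 (t + 1) = cB A q0 t + 1 := by simp [cB, h]

lemma cB_succ_neg {t : ℕ} (h : Al.a ∉ A.τ (pstate A q0 t)) :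
    cB A q0 (t + 1) = cB A q0 t := by simp [cB, h]

lemma cAB_sum : ∀ t, cA A q0 t + cB A q0 t = t := by
  intro t
  induction t with
  | zero => rfl
  | succ t ih =>
    by_cases h : Al.a ∈ A.τ (pstate A q0 t)
    · rw [cA_succ_pos A q0 h, cB_succ_pos A q0 h]; omega
    · rw [cA_succ_neg A q0 h, cB_succ_neg A q0 h]; omega

lemma cA_le (t : ℕ) : cA A q0 t ≤ t := by have := cAB_sum A q0 t; omega

lemma cB_le (t : ℕ) : cB A q0 t ≤ t := by have := cAB_sum A q0 t; omega

lemma cA_le_add (t k : ℕ) : cA A q0 t ≤ cA A q0 (t + k) := by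
  induction k with
  | zero => exact le_rfl
  | succ k ih =>
    by_cases h : Al.a ∈ A.τ (pstate A q0 (t + k))
    · rw [show t + (k+1) = (t+k) + 1 from rfl, cA_succ_pos A q0 h]; exact ih
    · rw [show t + (k+1) = (t+k) + 1 from rfl, cA_succ_neg A q0 h]; omega

lemma cA_add_le (t k : ℕ) : cA A q0 (t + k) ≤ cA A q0 t + k := by
  induction k with
  | zero => exact le_rfl
  | succ k ih =>
    by_cases h : Al.a ∈ A.τ (pstate A q0 (t + k))
    · rw [show t + (k+1) = (t+k) + 1 from rfl, cA_succ_pos A q0 h]; omega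
    · rw [show t + (k+1) = (t+k) + 1 from rfl, cA_succ_neg A q0 h]; omega

lemma pstate_zero : pstate A q0 0 = q0 := rfl

lemma pstate_succ (t : ℕ) : pstate A q0 (t + 1) = psi A q0 (pstate A q0 t) :=
  Function.iterate_succ_apply' _ _ _

lemma phi_some {t : ℕ} {p : Q} (h : phi A (pstate A q0 t) = some p) :
    pstate A q0 (t + 1) = p := by
  rw [pstate_succ, psi, h]; rfl

lemma pstate_add (k t : ℕ) : pstate A q0 (k + t) = (psi A q0)^[k] (pstate A q0 t) :=
  Function.iterate_add_apply _ _ _ _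

open Classical in
lemma follow (hdet : ∀ q x, (A.δ q x).Subsingleton) :
    ∀ (t n m : ℕ),
      (∀ u < t, (phi A (pstate A q0 u)).isSome) →
      (∀ u < t, if Al.a ∈ A.τ (pstate A q0 u) then cB A q0 u < m else cA A q0 u < n) →
      runAB A q0 n m =
        runAB A (pstate A q0 t) (n - cA A q0 t) (m - cB A q0 t) := by
  intro t
  induction t with
  | zero => intro n m _ _; simp [pstate_zero, cA, cB]
  | succ t ih =>
    intro n m hlive hgood
    have hIH := ih n m (fun u hu => hlive u (by omega)) (fun u hu => hgood u (by omega))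
    rw [hIH]
    have hsome := hlive t (by omega)
    obtain ⟨p, hp⟩ := Option.isSome_iff_exists.mp hsome
    have hps : pstate A q0 (t + 1) = p := phi_some A q0 hp
    have hg := hgood t (by omega)
    by_cases ha : Al.a ∈ A.τ (pstate A q0 t)
    · rw [if_pos ha] at hg
      have hb : Al.b ∉ A.τ (pstate A q0 t) ∧ dd A (pstate A q0 t) Al.b = some p := by
        unfold phi at hp
        rw [if_pos ha] at hp
        by_cases hb : Al.b ∈ A.τ (pstate A q0 t)
        · rw [if_pos hb] at hp; exact absurd hp (by simp)
        · rw [if_neg hb] at hp; exact ⟨hb, hp⟩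
      rw [runAB_b A (Or.inl ha) hb.1 (show 0 < m - cB A q0 t by omega), hb.2]
      simp only [Option.bind_some]
      rw [hps, cA_succ_pos A q0 ha, cB_succ_pos A q0 ha,
        show m - cB A q0 t - 1 = m - (cB A q0 t + 1) from by omega]
    · rw [if_neg ha] at hg
      have hda : dd A (pstate A q0 t) Al.a = some p := by
        unfold phi at hp
        rw [if_neg ha] at hp
        exact hp
      rw [runAB_a A ha (show 0 < n - cA A q0 t by omega), hda]
      simp only [Option.bind_some]
      rw [hps, cA_succ_neg A q0 ha, cB_succ_neg A q0 ha,
        show n - cA A q0 t - 1 = n - (cA A q0 t + 1) from by omega]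

open Classical in
lemma good_bound (n m : ℕ) :
    ∀ t, (∀ u < t, if Al.a ∈ A.τ (pstate A q0 u) then cB A q0 u < m else cA A q0 u < n) →
      cA A q0 t ≤ n ∧ cB A q0 t ≤ m := by
  intro t
  induction t with
  | zero => intro _; simp [cA, cB]
  | succ t ih =>
    intro hgood
    have hIH := ih (fun u hu => hgood u (by omega))
    have hg := hgood t (by omega)
    by_cases h : Al.a ∈ A.τ (pstate A q0 t)
    · rw [if_pos h] at hg
      rw [cA_succ_pos A q0 h, cB_succ_pos A q0 h]
      omega
    · rw [if_neg h] at hg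
      rw [cA_succ_neg A q0 h, cB_succ_neg A q0 h]
      omega

lemma exists_period [Fintype Q] :
    ∃ t1 p, 0 < p ∧ ∀ u, t1 ≤ u → pstate A q0 (u + p) = pstate A q0 u := by
  obtain ⟨x, y, hxy, heq⟩ := Finite.exists_ne_map_eq_of_infinite (pstate A q0)
  rcases hxy.lt_or_gt with hlt | hlt
  · refine ⟨x, y - x, by omega, fun u hu => ?_⟩
    calc pstate A q0 (u + (y - x)) = pstate A q0 ((u - x) + y) := by
          congr 1; omega
      _ = (psi A q0)^[u - x] (pstate A q0 y) := pstate_add A q0 _ _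
      _ = (psi A q0)^[u - x] (pstate A q0 x) := by rw [heq]
      _ = pstate A q0 ((u - x) + x) := (pstate_add A q0 _ _).symm
      _ = pstate A q0 u := by congr 1; omega
  · refine ⟨y, x - y, by omega, fun u hu => ?_⟩
    calc pstate A q0 (u + (x - y)) = pstate A q0 ((u - y) + x) := by
          congr 1; omega
      _ = (psi A q0)^[u - y] (pstate A q0 x) := pstate_add A q0 _ _
      _ = (psi A q0)^[u - y] (pstate A q0 y) := by rw [heq]
      _ = pstate A q0 ((u - y) + y) := (pstate_add A q0 _ _).symm
      _ = pstate A q0 u := by congr 1; omega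

lemma cA_period {t1 p : ℕ} (hper : ∀ u, t1 ≤ u → pstate A q0 (u + p) = pstate A q0 u) :
    ∀ u, t1 ≤ u → cA A q0 (u + p) = cA A q0 u + (cA A q0 (t1 + p) - cA A q0 t1) := by
  have hmono := cA_le_add A q0 t1 p
  set α := cA A q0 (t1 + p) - cA A q0 t1 with hα
  have key : ∀ k, cA A q0 (t1 + k + p) = cA A q0 (t1 + k) + α := by
    intro k
    induction k with
    | zero => simp; omega
    | succ k ih =>
      have e : t1 + (k + 1) + p = (t1 + k + p) + 1 := by omega
      rw [e]
      have eps : pstate A q0 (t1 + k + p) = pstate A q0 (t1 + k) := by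
        have := hper (t1 + k) (by omega)
        exact this
      by_cases h : Al.a ∈ A.τ (pstate A q0 (t1 + k))
      · rw [cA_succ_pos A q0 (by rw [eps]; exact h), ih,
          show t1 + (k+1) = (t1 + k) + 1 from by omega, cA_succ_pos A q0 h]
      · rw [cA_succ_neg A q0 (by rw [eps]; exact h), ih,
          show t1 + (k+1) = (t1 + k) + 1 from by omega, cA_succ_neg A q0 h]
        omega
  intro u hu
  have := key (u - t1)
  rw [show t1 + (u - t1) = u from by omega] at this
  exact this

end Sep
namespace Sep

lemma W_count_a (n m : ℕ) : (W n m).count Al.a = n := by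
  simp [W, List.count_append, List.count_replicate]

lemma W_count_b (n m : ℕ) : (W n m).count Al.b = m := by
  simp [W, List.count_append, List.count_replicate]

lemma W_count_c (n m : ℕ) : (W n m).count Al.c = 0 := by
  simp [W, List.count_append, List.count_replicate]

lemma W_c_not_mem (n m : ℕ) : Al.c ∉ W n m := by
  intro h
  have := List.count_pos_iff.mpr h
  rw [W_count_c] at this
  omega

lemma W_mem_Lvc (n m : ℕ) : W n m ∈ Lvc ↔ 2 * n = m := by
  constructor
  · rintro (⟨h1, -⟩ | ⟨-, h2⟩)
    · rw [W_count_c] at h1; omega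
    · rwa [W_count_a, W_count_b] at h2
  · intro h
    exact Or.inr ⟨W_c_not_mem n m, by rwa [W_count_a, W_count_b]⟩

lemma Wc_mem_Lvc (n m : ℕ) : W n m ++ [Al.c] ∈ Lvc ↔ n = m := by
  constructor
  · rintro (⟨-, h2⟩ | ⟨h1, -⟩)
    · simp only [List.count_append, W_count_a, W_count_b] at h2
      simp at h2
      exact h2
    · exact absurd (by simp : Al.c ∈ W n m ++ [Al.c]) h1
  · intro h
    refine Or.inl ⟨?_, ?_⟩
    · simp [List.count_append, W_count_c]
    · simp [List.count_append, W_count_a, W_count_b, h]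

theorem Lvc_not_D : Lvc ∉ DFAwtlLangs Al := by
  rintro ⟨Q, ft, A, ⟨⟨q0, hI⟩, hdet⟩, hlang⟩
  classical
  have hacc : ∀ w, A.Accepts w ↔ w ∈ Lvc := fun w => by
    rw [← Set.ext_iff.mp hlang w]; rfl
  by_cases hlive : ∀ t, (phi A (pstate A q0 t)).isSome
  · -- the symbolic path never halts nor dies
    obtain ⟨t1, p, hp, hper⟩ := exists_period A q0
    have hmonoA := cA_le_add A q0 t1 p
    have hstepA := cA_add_le A q0 t1 p
    have hs1 := cAB_sum A q0 t1
    have hs2 := cAB_sum A q0 (t1 + p)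
    obtain ⟨α, hαeq⟩ : ∃ α, cA A q0 (t1 + p) = cA A q0 t1 + α :=
      ⟨_, (Nat.add_sub_cancel' hmonoA).symm⟩
    have hmonoB : cB A q0 t1 ≤ cB A q0 (t1 + p) := by omega
    obtain ⟨β, hβeq⟩ : ∃ β, cB A q0 (t1 + p) = cB A q0 t1 + β :=
      ⟨_, (Nat.add_sub_cancel' hmonoB).symm⟩
    have hab : α + β = p := by omega
    have hcAper : ∀ u, t1 ≤ u → cA A q0 (u + p) = cA A q0 u + α := by
      intro u hu
      have h := cA_period A q0 hper u hu
      have he : cA A q0 (t1 + p) - cA A q0 t1 = α := by omega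
      rw [he] at h
      exact h
    have hcBper : ∀ u, t1 ≤ u → cB A q0 (u + p) = cB A q0 u + β := by
      intro u hu
      have h1 := cAB_sum A q0 u
      have h2 := cAB_sum A q0 (u + p)
      have h3 := hcAper u hu
      omega
    set N0 := t1 + p + 1 with hN0
    have KEY : ∀ n m, N0 ≤ n → N0 ≤ m →
        runAB A q0 n m = runAB A q0 (n + α) (m + β) := by
      intro n m hn hm
      have hbadex : ∃ t, (if Al.a ∈ A.τ (pstate A q0 t) then m ≤ cB A q0 t
          else n ≤ cA A q0 t) := by
        by_contra hno
        push_neg at hno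
        have hgood : ∀ u < n + m + 1, if Al.a ∈ A.τ (pstate A q0 u) then cB A q0 u < m
            else cA A q0 u < n := by
          intro u _
          have h := hno u
          by_cases hP : Al.a ∈ A.τ (pstate A q0 u)
          · rw [if_pos hP] at h ⊢; omega
          · rw [if_neg hP] at h ⊢; omega
        have hbound := good_bound A q0 n m (n + m + 1) hgood
        have := cAB_sum A q0 (n + m + 1)
        omega
      set T := Nat.find hbadex with hT
      have hbadT := Nat.find_spec hbadex
      rw [← hT] at hbadT
      have hgoodT : ∀ u < T, if Al.a ∈ A.τ (pstate A q0 u) then cB A q0 u < m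
          else cA A q0 u < n := by
        intro u hu
        have h := Nat.find_min hbadex hu
        by_cases hP : Al.a ∈ A.τ (pstate A q0 u)
        · rw [if_pos hP] at h ⊢; omega
        · rw [if_neg hP] at h ⊢; omega
      have hTbig : t1 ≤ T := by
        by_contra hlt
        push_neg at hlt
        have h1 := cA_le A q0 T
        have h2 := cB_le A q0 T
        by_cases hP : Al.a ∈ A.τ (pstate A q0 T)
        · rw [if_pos hP] at hbadT; omega
        · rw [if_neg hP] at hbadT; omega
      have hf1 := follow A q0 hdet T n m (fun u _ => hlive u) hgoodT
      have hgood' : ∀ u < T + p, if Al.a ∈ A.τ (pstate A q0 u) then cB A q0 u < m + β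
          else cA A q0 u < n + α := by
        intro u hu
        by_cases hsmall : u < t1 + p
        · have h1 := cA_le A q0 u
          have h2 := cB_le A q0 u
          by_cases hP : Al.a ∈ A.τ (pstate A q0 u)
          · rw [if_pos hP]; omega
          · rw [if_neg hP]; omega
        · push_neg at hsmall
          have hu' : u - p < T := by omega
          have ht1u : t1 ≤ u - p := by omega
          have hps : pstate A q0 u = pstate A q0 (u - p) := by
            have := hper (u - p) ht1u
            rw [show u - p + p = u from by omega] at this
            exact this
          have hcau : cA A q0 u = cA A q0 (u - p) + α := by
            have := hcAper (u - p) ht1u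
            rw [show u - p + p = u from by omega] at this
            exact this
          have hcbu : cB A q0 u = cB A q0 (u - p) + β := by
            have := hcBper (u - p) ht1u
            rw [show u - p + p = u from by omega] at this
            exact this
          have hg := hgoodT (u - p) hu'
          rw [hps, hcau, hcbu]
          by_cases hP : Al.a ∈ A.τ (pstate A q0 (u - p))
          · rw [if_pos hP] at hg ⊢; omega
          · rw [if_neg hP] at hg ⊢; omega
      have hf2 := follow A q0 hdet (T + p) (n + α) (m + β) (fun u _ => hlive u) hgood'
      rw [hf1, hf2, hper T hTbig, hcAper T hTbig, hcBper T hTbig,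
        show n + α - (cA A q0 T + α) = n - cA A q0 T from by omega,
        show m + β - (cB A q0 T + β) = m - cB A q0 T from by omega]
    -- derive β = 2α from the doubling words
    have h2a : 2 * (N0 + α) = 2 * N0 + β := by
      have hA1 : A.Accepts (W N0 (2 * N0)) := (hacc _).mpr ((W_mem_Lvc _ _).mpr rfl)
      have hAB1 := (accW_iff A hdet q0 hI N0 (2 * N0)).mp hA1
      have hAB2 : accAB A q0 (N0 + α) (2 * N0 + β) := by
        obtain ⟨r, hr, hF⟩ := hAB1
        exact ⟨r, by rw [← KEY N0 (2 * N0) le_rfl (by omega)]; exact hr, hF⟩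
      have hA2 := (hacc _).mp ((accW_iff A hdet q0 hI _ _).mpr hAB2)
      exact (W_mem_Lvc _ _).mp hA2
    -- derive α = β from the equal-count words with c
    have hαβ : N0 + α = N0 + β := by
      have hA1 : A.Accepts (W N0 N0 ++ [Al.c]) := (hacc _).mpr ((Wc_mem_Lvc _ _).mpr rfl)
      have hAB1 := (accC_iff A hdet q0 hI N0 N0).mp hA1
      have hAB2 : accC A q0 (N0 + α) (N0 + β) := by
        obtain ⟨r, hr, hφ⟩ := hAB1
        exact ⟨r, by rw [← KEY N0 N0 le_rfl le_rfl]; exact hr, hφ⟩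
      have hA2 := (hacc _).mp ((accC_iff A hdet q0 hI _ _).mpr hAB2)
      exact (Wc_mem_Lvc _ _).mp hA2
    omega
  · -- the symbolic path halts or dies at time T0
    have hex : ∃ t, ¬ (phi A (pstate A q0 t)).isSome := not_forall.mp hlive
    set T0 := Nat.find hex with hT0def
    have hT0 := Nat.find_spec hex
    have hmin : ∀ u < T0, (phi A (pstate A q0 u)).isSome := fun u hu =>
      not_not.mp (Nat.find_min hex hu)
    have hfol : ∀ n m, T0 < n → T0 < m →
        runAB A q0 n m =
          runAB A (pstate A q0 T0) (n - cA A q0 T0) (m - cB A q0 T0) := by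
      intro n m hn hm
      refine follow A q0 hdet T0 n m hmin fun u hu => ?_
      have h1 := cA_le A q0 u
      have h2 := cB_le A q0 u
      by_cases hP : Al.a ∈ A.τ (pstate A q0 u)
      · rw [if_pos hP]; omega
      · rw [if_neg hP]; omega
    have hcAT := cA_le A q0 T0
    have hcBT := cB_le A q0 T0
    set q := pstate A q0 T0 with hq
    have hnone : phi A q = none := Option.not_isSome_iff_eq_none.mp hT0
    by_cases ha : Al.a ∈ A.τ q
    · by_cases hb : Al.b ∈ A.τ q
      · -- halting state: acceptance is independent of the counts
        have hrun : ∀ n m, T0 < n → T0 < m →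
            runAB A q0 n m = some (q, n - cA A q0 T0, m - cB A q0 T0) := by
          intro n m hn hm
          rw [hfol n m hn hm]
          exact runAB_halt A (Or.inl ha) (Or.inl hb)
        have hF : q ∈ A.F := by
          have hA1 : A.Accepts (W (T0 + 1) (2 * (T0 + 1))) :=
            (hacc _).mpr ((W_mem_Lvc _ _).mpr rfl)
          obtain ⟨r, hr, hF⟩ := (accW_iff A hdet q0 hI _ _).mp hA1
          rw [hrun _ _ (by omega) (by omega)] at hr
          cases hr
          exact hF
        have hAB2 : accAB A q0 (T0 + 1) (2 * (T0 + 1) + 1) :=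
          ⟨(q, _, _), hrun _ _ (by omega) (by omega), hF⟩
        have hA2 := (hacc _).mp ((accW_iff A hdet q0 hI _ _).mpr hAB2)
        have := (W_mem_Lvc _ _).mp hA2
        omega
      · -- the run dies reading b
        have hdb : dd A q Al.b = none := by
          unfold phi at hnone
          rwa [if_pos ha, if_neg hb] at hnone
        have hnone' : runAB A q0 (T0 + 1) (2 * (T0 + 1)) = none := by
          rw [hfol _ _ (by omega) (by omega),
            runAB_b A (Or.inl ha) hb (show 0 < 2 * (T0 + 1) - cB A q0 T0 by omega), hdb]
          rfl
        have hA1 : A.Accepts (W (T0 + 1) (2 * (T0 + 1))) :=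
          (hacc _).mpr ((W_mem_Lvc _ _).mpr rfl)
        obtain ⟨r, hr, -⟩ := (accW_iff A hdet q0 hI _ _).mp hA1
        rw [hnone'] at hr
        exact absurd hr (by simp)
    · -- the run dies reading a
      have hda : dd A q Al.a = none := by
        unfold phi at hnone
        rwa [if_neg ha] at hnone
      have hnone' : runAB A q0 (T0 + 1) (2 * (T0 + 1)) = none := by
        rw [hfol _ _ (by omega) (by omega),
          runAB_a A ha (show 0 < T0 + 1 - cA A q0 T0 by omega), hda]
        rfl
      have hA1 : A.Accepts (W (T0 + 1) (2 * (T0 + 1))) :=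
        (hacc _).mpr ((W_mem_Lvc _ _).mpr rfl)
      obtain ⟨r, hr, -⟩ := (accW_iff A hdet q0 hI _ _).mp hA1
      rw [hnone'] at hr
      exact absurd hr (by simp)

end Sep

/-- ℒ(DFAwtl) ⊊ ℒ(RDFAwtl); the witness is L_{∨,c}, which is
accepted by an RDFAwtl but by no DFAwtl. -/
theorem DFAwtl_ssubset_RDFAwtl :
    (∀ (α : Type) [Fintype α], DFAwtlLangs α ⊆ RDFAwtlLangs α) ∧
    DFAwtlLangs Al ⊂ RDFAwtlLangs Al ∧
    Lvc ∈ RDFAwtlLangs Al ∧ Lvc ∉ DFAwtlLangs Al := by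
  refine ⟨fun α _ => Sep.dfa_subset α, ?_, Sep.Lvc_mem_R, Sep.Lvc_not_D⟩
  rw [Set.ssubset_def]
  exact ⟨Sep.dfa_subset Al, fun h => Sep.Lvc_not_D (h Sep.Lvc_mem_R)⟩
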